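/- Let M be a matroid on a finite ground set E, let ≤ be a linear order on E, and let B₀ = B_≤(M) be the lex-first basis of M. Then for every function w : E → ℝ that is strictly decreasing with respect to ≤ (i.e. a < b implies w(a) > w(b)) and every basis B′ of M with B′ ≠ B₀, one has ∑_{i∈B′} w(i) < ∑_{i∈B₀} w(i). In particular, B₀ is the unique basis of M maximizing ∑_{i∈B} w(i) simultaneously for all strictly ≤-decreasing weight functions w. -/

import Mathlib

open Matroid
open scoped Classical

variable {α : Type*}

/-- `B₀` is the lex-first basis of the matroid `M` with respect to the order relation `le`:
it is a basis, and for every other basis `B'`, the `le`-least element of the symmetric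
difference `B₀ ∆ B'` belongs to `B₀`. -/
def IsLexFirstBasis (M : Matroid α) (le : α → α → Prop) (B₀ : Set α) : Prop :=
  M.IsBase B₀ ∧ ∀ B', M.IsBase B' → B' ≠ B₀ →
    ∀ m ∈ symmDiff B₀ B', (∀ x ∈ symmDiff B₀ B', le m x) → m ∈ B₀

/-- Deletion of a set `D` from the matroid `M`: the restriction of `M` to `M.E \ D`. -/
def mdelete (M : Matroid α) (D : Set α) : Matroid α := M ↾ (M.E \ D)

/-- Contraction of a set `C` in the matroid `M`, defined via duality:
`M / C = (M✶ \ C)✶`, a matroid on `M.E \ C`. -/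
def mcontract (M : Matroid α) (C : Set α) : Matroid α := (M✶ ↾ (M.E \ C))✶

/-- Dual basis-exchange: given bases `B₁, B₂` and `m ∈ B₁ \ B₂`, we can insert `m`
into `B₂` and remove some element of `B₂ \ B₁` to get a basis. -/
theorem aux_dual_exch {M : Matroid α} {B₁ B₂ : Set α} {m : α} (hB₁ : M.IsBase B₁)
    (hB₂ : M.IsBase B₂) (hm : m ∈ B₁ \ B₂) :
    ∃ y ∈ B₂ \ B₁, M.IsBase (insert m (B₂ \ {y})) := by
  have h1 := hB₁.compl_isBase_dual
  have h2 := hB₂.compl_isBase_dual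
  have hmE : m ∈ M.E := hB₁.subset_ground hm.1
  obtain ⟨y, hy, hyB⟩ := h2.exchange h1 ⟨⟨hmE, hm.2⟩, fun h => h.2 hm.1⟩
  have hyE : y ∈ M.E := hy.1.1
  have hyB₂ : y ∈ B₂ := by by_contra h; exact hy.2 ⟨hyE, h⟩
  refine ⟨y, ⟨hyB₂, hy.1.2⟩, ?_⟩
  have := hyB.compl_isBase_of_dual
  convert this using 1
  have hB₂E := hB₂.subset_ground
  ext x
  simp only [Set.mem_insert_iff, Set.mem_diff, Set.mem_singleton_iff]
  constructor
  · rintro (rfl | ⟨hx, hxy⟩)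
    · refine ⟨hmE, ?_⟩
      rintro (rfl | ⟨-, hxx⟩)
      · exact hy.1.2 hm.1
      · exact hxx rfl
    · exact ⟨hB₂E hx, by rintro (rfl | ⟨⟨_, h⟩, _⟩) <;> tauto⟩
  · rintro ⟨hxE, hx⟩
    push_neg at hx
    obtain ⟨hxy, hx2⟩ := hx
    by_cases hxm : x = m
    · left; exact hxm
    · right
      refine ⟨?_, hxy⟩
      by_contra h
      exact hxm (hx2 ⟨hxE, h⟩)

theorem aux_finsum_eq (w : α → ℝ) {S : Set α} (hS : S.Finite) :
    ∑ᶠ i ∈ S, w i = ∑ i ∈ hS.toFinset, w i := by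
  rw [← finsum_mem_coe_finset, Set.Finite.coe_toFinset]

/-- The lex-first basis `B₀` of a matroid (w.r.t. a linear order `le`) strictly maximizes
`∑_{i ∈ B} w i` among all bases, for every weight function `w` that is strictly decreasing
with respect to `le`. -/
theorem stmt8 [Fintype α] (M : Matroid α) (le : α → α → Prop)
    (hlin : IsLinearOrder α le)
    (B₀ : Set α) (hB₀ : IsLexFirstBasis M le B₀)
    (w : α → ℝ) (hw : ∀ a b, le a b → a ≠ b → w b < w a)
    (B' : Set α) (hB' : M.IsBase B') (hne : B' ≠ B₀) :
    ∑ᶠ i ∈ B', w i < ∑ᶠ i ∈ B₀, w i := by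
  classical
  haveI := hlin
  letI pre : PartialOrder α :=
    { le := le
      lt := fun a b => le a b ∧ ¬ le b a
      le_refl := fun a => refl_of le a
      le_trans := fun a b c hab hbc => trans_of le hab hbc
      lt_iff_le_not_ge := fun _ _ => Iff.rfl
      le_antisymm := fun _ _ hab hba => antisymm hab hba }
  have key : ∀ n (B' : Set α), M.IsBase B' → B' ≠ B₀ → (symmDiff B₀ B').ncard = n →
      ∑ᶠ i ∈ B', w i < ∑ᶠ i ∈ B₀, w i := by
    intro n
    induction n using Nat.strong_induction_on with
    | _ n IH =>
      intro B' hB' hne hcard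
      set S := symmDiff B₀ B' with hS
      have hSne : S.Nonempty := by
        rw [Set.nonempty_iff_ne_empty]
        intro h
        exact hne ((symmDiff_eq_bot.mp h).symm)
      -- least element of S
      obtain ⟨m, hmS, hmin''⟩ := Set.Finite.exists_minimalFor id S (Set.toFinite S) hSne
      have hmin' : ∀ x ∈ S, le x m → m = x := fun x hx h => antisymm (hmin'' hx h) h
      have hmin : ∀ x ∈ S, le m x := by
        intro x hx
        rcases total_of le m x with h | h
        · exact h
        · have hmx : m = x := hmin' x hx h
          rw [hmx]; exact refl_of le x
      have hmB₀ : m ∈ B₀ := hB₀.2 B' hB' hne m hmS hmin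
      have hmB' : m ∉ B' := by
        rcases Set.mem_symmDiff.mp hmS with h | h
        · exact h.2
        · exact absurd hmB₀ h.2
      obtain ⟨y, hy, hB''⟩ := aux_dual_exch hB₀.1 hB' ⟨hmB₀, hmB'⟩
      set B'' : Set α := insert m (B' \ {y}) with hB''def
      have hym : y ≠ m := fun h => hy.2 (h ▸ hmB₀)
      have hyS : y ∈ S := Set.mem_symmDiff.mpr (Or.inr ⟨hy.1, hy.2⟩)
      have hwy : w y < w m := hw m y (hmin y hyS) (fun h => hym h.symm)
      -- sum over B''
      have hsum : ∑ᶠ i ∈ B'', w i = w m - w y + ∑ᶠ i ∈ B', w i := by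
        rw [aux_finsum_eq w (Set.toFinite B''), aux_finsum_eq w (Set.toFinite B')]
        have h1 : (Set.toFinite B'').toFinset = insert m ((Set.toFinite B').toFinset.erase y) := by
          ext x
          simp only [Set.Finite.mem_toFinset, Finset.mem_insert, Finset.mem_erase, hB''def,
            Set.mem_insert_iff, Set.mem_diff, Set.mem_singleton_iff]
          tauto
        rw [h1, Finset.sum_insert (by
          simp only [Finset.mem_erase, Set.Finite.mem_toFinset]
          exact fun h => hmB' h.2)]
        have h2 : ∑ i ∈ (Set.toFinite B').toFinset.erase y, w i
            = ∑ i ∈ (Set.toFinite B').toFinset, w i - w y := by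
          have := Finset.sum_erase_add (Set.toFinite B').toFinset w
            ((Set.Finite.mem_toFinset _).mpr hy.1)
          linarith
        rw [h2]; ring
      have hlt : ∑ᶠ i ∈ B', w i < ∑ᶠ i ∈ B'', w i := by
        rw [hsum]; linarith
      by_cases hB''eq : B'' = B₀
      · rw [← hB''eq]; exact hlt
      · have hsub : symmDiff B₀ B'' ⊆ S \ {m} := by
          intro x hx
          rcases Set.mem_symmDiff.mp hx with ⟨hx1, hx2⟩ | ⟨hx1, hx2⟩
          · have hxm : x ≠ m := fun h => hx2 (h ▸ Set.mem_insert m _)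
            have hxB' : x ∉ B' := by
              intro hxB'
              have hxy : x ≠ y := fun h => hy.2 (h ▸ hx1)
              exact hx2 (Set.mem_insert_of_mem _ ⟨hxB', hxy⟩)
            exact ⟨Set.mem_symmDiff.mpr (Or.inl ⟨hx1, hxB'⟩), hxm⟩
          · have hxm : x ≠ m := fun h => hx2 (h ▸ hmB₀)
            rcases hx1 with h | h
            · exact absurd h hxm
            · exact ⟨Set.mem_symmDiff.mpr (Or.inr ⟨h.1, hx2⟩), hxm⟩
        have hlt2 : (symmDiff B₀ B'').ncard < n := by
          calc (symmDiff B₀ B'').ncard ≤ (S \ {m}).ncard :=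
                Set.ncard_le_ncard hsub (Set.toFinite _)
            _ < S.ncard := Set.ncard_diff_singleton_lt_of_mem hmS (Set.toFinite _)
            _ = n := hcard
        have := IH _ hlt2 B'' hB'' hB''eq rfl
        linarith
  exact key _ B' hB' hne rfl
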